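/- Let K ≥ 3 be odd, let A be a unital star ring, and let z_1,…,z_N ∈ A be self-adjoint elements (z_i* = z_i) with Σ_{i=1}^N z_i² = 1, such that all length-K products pairwise commute: z_{i_1}⋯z_{i_K} · z_{j_1}⋯z_{j_K} = z_{j_1}⋯z_{j_K} · z_{i_1}⋯z_{i_K} for all index tuples. Then the z_i pairwise commute: z_i z_j = z_j z_i for all i, j. (Hence for odd K the real K-half-liberated sphere coincides with the classical real sphere.) -/

import Mathlib

section Aux

variable {A : Type*} [Ring A] {N : ℕ} (z : Fin N → A)

/-- The set of products of `n` of the `z`'s. -/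
def stmt15Words (n : ℕ) : Set A :=
  {x | ∃ l : List (Fin N), l.length = n ∧ (l.map z).prod = x}

lemma stmt15_mul_mem {p q : ℕ} {a b : A}
    (ha : a ∈ AddSubmonoid.closure (stmt15Words z p))
    (hb : b ∈ AddSubmonoid.closure (stmt15Words z q)) :
    a * b ∈ AddSubmonoid.closure (stmt15Words z (p + q)) := by
  induction ha using AddSubmonoid.closure_induction with
  | mem x hx =>
    induction hb using AddSubmonoid.closure_induction with
    | mem y hy =>
      obtain ⟨l, hl, rfl⟩ := hx
      obtain ⟨m, hm, rfl⟩ := hy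
      refine AddSubmonoid.subset_closure ⟨l ++ m, by simp [hl, hm], ?_⟩
      simp
    | zero => simpa using AddSubmonoid.zero_mem _
    | add y₁ y₂ _ _ h1 h2 =>
      rw [mul_add]; exact AddSubmonoid.add_mem _ h1 h2
  | zero => simpa using AddSubmonoid.zero_mem _
  | add x₁ x₂ _ _ h1 h2 =>
    rw [add_mul]; exact AddSubmonoid.add_mem _ h1 h2

end Aux

/-- Let `K ≥ 3` be odd and let `z₁,…,z_N` be self-adjoint elements of a
unital star ring with `Σ zᵢ² = 1`, such that all length-`K` products in the `zᵢ`
pairwise commute. Then the `zᵢ` pairwise commute. -/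
theorem stmt_15 {A : Type*} [Ring A] [StarRing A] {N : ℕ} (K : ℕ)
    (hK : 3 ≤ K) (hodd : Odd K)
    (z : Fin N → A)
    (hsa : ∀ i, star (z i) = z i)
    (hsum : ∑ i, z i * z i = 1)
    (hcomm : ∀ l m : List (Fin N), l.length = K → m.length = K →
      (l.map z).prod * (m.map z).prod = (m.map z).prod * (l.map z).prod) :
    ∀ i j, z i * z j = z j * z i := by
  obtain ⟨t, ht⟩ := hodd
  -- all elements of the additive closure of length-K words commute
  have key : ∀ a ∈ AddSubmonoid.closure (stmt15Words z K),
      ∀ b ∈ AddSubmonoid.closure (stmt15Words z K), a * b = b * a := by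
    intro a ha b hb
    induction ha using AddSubmonoid.closure_induction with
    | mem x hx =>
      induction hb using AddSubmonoid.closure_induction with
      | mem y hy =>
        obtain ⟨l, hl, rfl⟩ := hx
        obtain ⟨m, hm, rfl⟩ := hy
        exact hcomm l m hl hm
      | zero => simp
      | add y₁ y₂ _ _ h1 h2 => rw [mul_add, add_mul, h1, h2]
    | zero => simp
    | add x₁ x₂ _ _ h1 h2 => rw [mul_add, add_mul, h1, h2]
  set S : A := ∑ i, z i * z i with hS
  have hSmem : S ∈ AddSubmonoid.closure (stmt15Words z 2) := by
    refine AddSubmonoid.sum_mem _ fun i _ => AddSubmonoid.subset_closure ?_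
    exact ⟨[i, i], rfl, by simp [mul_assoc]⟩
  have hpow : ∀ n : ℕ, S ^ n ∈ AddSubmonoid.closure (stmt15Words z (2 * n)) := by
    intro n
    induction n with
    | zero =>
      exact AddSubmonoid.subset_closure ⟨[], rfl, by simp⟩
    | succ n ih =>
      rw [pow_succ, show 2 * (n + 1) = 2 * n + 2 from by ring]
      exact stmt15_mul_mem z ih hSmem
  have hword : ∀ i : Fin N, z i * S ^ t ∈ AddSubmonoid.closure (stmt15Words z K) := by
    intro i
    have hi : z i ∈ AddSubmonoid.closure (stmt15Words z 1) :=
      AddSubmonoid.subset_closure ⟨[i], rfl, by simp⟩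
    rw [ht, show 2 * t + 1 = 1 + 2 * t from by ring]
    exact stmt15_mul_mem z hi (hpow t)
  have hS1 : S = 1 := hsum
  intro i j
  have h1 : z i * z j = (z i * S ^ t) * (z j * S ^ t) := by
    simp [hS1, mul_assoc]
  have h2 : z j * z i = (z j * S ^ t) * (z i * S ^ t) := by
    simp [hS1, mul_assoc]
  rw [h1, h2, key _ (hword i) _ (hword j)]
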